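/- Let X : [0,∞) → ℝ² be continuous, twice continuously differentiable on (0,∞), with X(0) = X₀ and Ẋ(t) → 0 as t → 0⁺, satisfying Ẍ(t) + (3/t)·Ẋ(t) + ∇f_{ε,a}(X(t)) = 0 for all t > 0. Define the angular momentum J(t) = det(X(t), Ẋ(t)) = X₁(t)·Ẋ₂(t) − X₂(t)·Ẋ₁(t). Then J satisfies the torque equation J′(t) = −(3/t)·J(t) + ε·X₂(t)·(X₁(t) − a)₊ for all t > 0. -/

import Mathlib

open Real Filter Set

/-- `F(0) = 0`, `F(r) = ∫₀^r du/(−log u)` for `0 < r ≤ e⁻²`,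
`F(r) = F(e⁻²) + (1/2)(r − e⁻²)` for `r ≥ e⁻²`. -/
noncomputable def F (r : ℝ) : ℝ :=
  if r ≤ Real.exp (-2) then ∫ u in (0:ℝ)..r, 1 / (-Real.log u)
  else (∫ u in (0:ℝ)..Real.exp (-2), 1 / (-Real.log u)) + (1/2) * (r - Real.exp (-2))

/-- `f_{ε,a}(x₁,x₂) = F(√(x₁²+x₂²)) + (ε/2)·((x₁ − a)₊)²`. -/
noncomputable def feps (ε a : ℝ) (x : EuclideanSpace ℝ (Fin 2)) : ℝ :=
  F (Real.sqrt ((x 0)^2 + (x 1)^2)) + (ε/2) * (max (x 0 - a) 0)^2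

/-- Derivative of `F`. -/
noncomputable def Fd (r : ℝ) : ℝ := if r ≤ Real.exp (-2) then 1 / (-Real.log r) else 1/2

lemma intInt {r : ℝ} (h : 0 < r) (hr : r ≤ Real.exp (-2)) :
    IntervalIntegrable (fun u => 1 / (-Real.log u)) MeasureTheory.volume 0 r := by
  refine IntervalIntegrable.mono_fun (f := fun _ => (1:ℝ)/2) intervalIntegrable_const ?_ ?_
  · exact ((measurable_const.div Real.measurable_log.neg).aestronglyMeasurable).restrict
  · rw [Set.uIoc_of_le h.le]
    filter_upwards [MeasureTheory.ae_restrict_mem measurableSet_Ioc] with u hu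
    have hu0 : 0 < u := hu.1
    have hlog : Real.log u ≤ -2 := by
      calc Real.log u ≤ Real.log (Real.exp (-2)) := Real.log_le_log hu0 (hu.2.trans hr)
      _ = -2 := Real.log_exp _
    have h2 : (2:ℝ) ≤ -Real.log u := by linarith
    have hnn : 0 ≤ 1 / (-Real.log u) := by positivity
    simp only [Real.norm_eq_abs, abs_of_nonneg hnn, abs_of_nonneg (by norm_num : (0:ℝ) ≤ 1/2)]
    rw [div_le_div_iff₀ (by linarith) (by norm_num)]
    linarith

lemma contAt {r : ℝ} (h : 0 < r) (hr : r ≤ Real.exp (-2)) :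
    ContinuousAt (fun u => 1 / (-Real.log u)) r := by
  have hlog : Real.log r ≤ -2 := by
    calc Real.log r ≤ Real.log (Real.exp (-2)) := Real.log_le_log h hr
    _ = -2 := Real.log_exp _
  exact continuousAt_const.div ((Real.continuousAt_log h.ne').neg) (by linarith)

lemma phi_hasDeriv {r : ℝ} (h : 0 < r) (hr : r ≤ Real.exp (-2)) :
    HasDerivAt (fun s => ∫ u in (0:ℝ)..s, 1 / (-Real.log u)) (1 / (-Real.log r)) r :=
  intervalIntegral.integral_hasDerivAt_right (intInt h hr)
    ((measurable_const.div Real.measurable_log.neg).stronglyMeasurable.stronglyMeasurableAtFilter)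
    (contAt h hr)

lemma F_hasDeriv {r : ℝ} (h : 0 < r) : HasDerivAt F (Fd r) r := by
  rcases lt_trichotomy r (Real.exp (-2)) with hlt | heq | hgt
  · have hφ := phi_hasDeriv h hlt.le
    have heqv : F =ᶠ[nhds r] fun s => ∫ u in (0:ℝ)..s, 1 / (-Real.log u) := by
      filter_upwards [Iio_mem_nhds hlt] with s hs
      have : s ≤ Real.exp (-2) := le_of_lt hs
      simp [F, this]
    rw [Fd, if_pos hlt.le]
    exact hφ.congr_of_eventuallyEq heqv
  · have hφ := phi_hasDeriv h heq.le
    have hval : (1:ℝ) / (-Real.log r) = 1/2 := by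
      rw [heq, Real.log_exp]; norm_num
    have hleft : HasDerivWithinAt F (1/2) (Iic r) r := by
      refine ((hφ.hasDerivWithinAt (s := Iic r)).congr ?_ ?_).congr_deriv hval
      · intro s hs
        have : s ≤ Real.exp (-2) := heq ▸ hs.out
        simp [F, this]
      · simp [F, heq.le, heq]
    have hright : HasDerivWithinAt F (1/2) (Ici r) r := by
      have hlin : HasDerivAt (fun s : ℝ => (∫ u in (0:ℝ)..Real.exp (-2), 1 / (-Real.log u))
          + (1/2) * (s - Real.exp (-2))) (1/2) r := by
        simpa using (((hasDerivAt_id r).sub_const (Real.exp (-2))).const_mul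
          ((1:ℝ)/2)).const_add (∫ u in (0:ℝ)..Real.exp (-2), 1 / (-Real.log u))
      refine (hlin.hasDerivWithinAt (s := Ici r)).congr ?_ ?_
      · intro s hs
        rcases eq_or_lt_of_le (heq ▸ hs.out) with h1 | h1
        · simp [F, ← h1]
        · have : ¬ s ≤ Real.exp (-2) := not_le.mpr h1
          simp [F, this]
      · simp [F, heq.le, heq]
    have huniv := hleft.union hright
    rw [Iic_union_Ici] at huniv
    rw [Fd, if_pos heq.le, hval]
    exact hasDerivWithinAt_univ.mp huniv
  · have hlin : HasDerivAt (fun s : ℝ => (∫ u in (0:ℝ)..Real.exp (-2), 1 / (-Real.log u))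
        + (1/2) * (s - Real.exp (-2))) (1/2) r := by
      simpa using (((hasDerivAt_id r).sub_const (Real.exp (-2))).const_mul
        ((1:ℝ)/2)).const_add (∫ u in (0:ℝ)..Real.exp (-2), 1 / (-Real.log u))
    have heqv : F =ᶠ[nhds r] fun s => (∫ u in (0:ℝ)..Real.exp (-2), 1 / (-Real.log u))
        + (1/2) * (s - Real.exp (-2)) := by
      filter_upwards [Ioi_mem_nhds hgt] with s hs
      have : ¬ s ≤ Real.exp (-2) := not_le.mpr hs
      simp [F, this]
    rw [Fd, if_neg (not_le.mpr hgt)]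
    exact hlin.congr_of_eventuallyEq heqv

lemma hasDerivAt_maxsq (a u : ℝ) :
    HasDerivAt (fun v => (max (v - a) 0)^2) (2 * max (u - a) 0) u := by
  rcases lt_trichotomy u a with h | h | h
  · have heqv : (fun v => (max (v - a) 0)^2) =ᶠ[nhds u] fun _ => (0:ℝ) := by
      filter_upwards [Iio_mem_nhds h] with v hv
      have : v - a ≤ 0 := by simp at hv; linarith
      simp [max_eq_right this]
    have : max (u - a) 0 = 0 := max_eq_right (by linarith)
    rw [this, mul_zero]
    exact (hasDerivAt_const u (0:ℝ)).congr_of_eventuallyEq heqv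
  · subst h
    rw [hasDerivAt_iff_isLittleO]
    simp only [sub_self, max_self, max_eq_right le_rfl, mul_zero, zero_mul, smul_eq_mul,
      ne_eq, sub_zero]
    rw [Asymptotics.isLittleO_iff]
    intro c hc
    filter_upwards [Metric.ball_mem_nhds u hc] with v hv
    rw [Metric.mem_ball, Real.dist_eq] at hv
    have h1 : max (v - u) 0 ≤ |v - u| := max_le (le_abs_self _) (abs_nonneg _)
    have h2 : (0:ℝ) ≤ max (v - u) 0 := le_max_right _ _
    have : (max (v - u) 0)^2 ≤ |v - u| * |v - u| := by nlinarith
    simp only [Real.norm_eq_abs]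
    calc |(max (v - u) 0)^2 - 0^2| = (max (v - u) 0)^2 := by
          rw [(by norm_num : (0:ℝ)^2 = 0), sub_zero]; exact abs_of_nonneg (by positivity)
      _ ≤ |v - u| * |v - u| := this
      _ ≤ c * |v - u| := by nlinarith [abs_nonneg (v - u)]
  · have heqv : (fun v => (max (v - a) 0)^2) =ᶠ[nhds u] fun v => (v - a)^2 := by
      filter_upwards [Ioi_mem_nhds h] with v hv
      have : (0:ℝ) ≤ v - a := by simp at hv; linarith
      simp [max_eq_left this]
    have hd : HasDerivAt (fun v : ℝ => (v - a)^2) (2 * (u - a)) u := by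
      simpa using ((hasDerivAt_id u).sub_const a).fun_pow 2
    rw [max_eq_left (by linarith : 0 ≤ u - a)]
    exact hd.congr_of_eventuallyEq heqv

lemma feps_hasGradient (ε a : ℝ) (x : EuclideanSpace ℝ (Fin 2)) (hx : ¬(x 0 = 0 ∧ x 1 = 0)) :
    HasGradientAt (feps ε a)
      ((Fd (Real.sqrt ((x 0)^2 + (x 1)^2)) / Real.sqrt ((x 0)^2 + (x 1)^2)) • x
        + (ε * max (x 0 - a) 0) • EuclideanSpace.single (0 : Fin 2) (1:ℝ)) x := by
  have hψpos : 0 < (x 0)^2 + (x 1)^2 := by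
    rcases not_and_or.mp hx with h | h <;> positivity
  have hρpos : 0 < Real.sqrt ((x 0)^2 + (x 1)^2) := Real.sqrt_pos.mpr hψpos
  have h0 : HasFDerivAt (𝕜 := ℝ) (fun y : EuclideanSpace ℝ (Fin 2) => (y 0 : ℝ))
      (EuclideanSpace.proj (0 : Fin 2)) x := by
    have h := (EuclideanSpace.proj (0 : Fin 2) (𝕜 := ℝ)).hasFDerivAt (x := x); convert h using 2; rfl
  have h1 : HasFDerivAt (𝕜 := ℝ) (fun y : EuclideanSpace ℝ (Fin 2) => (y 1 : ℝ))
      (EuclideanSpace.proj (1 : Fin 2)) x := by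
    have h := (EuclideanSpace.proj (1 : Fin 2) (𝕜 := ℝ)).hasFDerivAt (x := x); convert h using 2; rfl
  have hψ : HasFDerivAt (fun y : EuclideanSpace ℝ (Fin 2) => (y 0)^2 + (y 1)^2)
      (((2 : ℕ) * x 0 ^ 1) • (EuclideanSpace.proj (𝕜 := ℝ) (0 : Fin 2)) +
        ((2 : ℕ) * x 1 ^ 1) • (EuclideanSpace.proj (𝕜 := ℝ) (1 : Fin 2))) x :=
    by
      have e0 := (hasDerivAt_pow 2 (x 0)).comp_hasFDerivAt x h0
      have e1 := (hasDerivAt_pow 2 (x 1)).comp_hasFDerivAt x h1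
      exact e0.add e1
  have hs := (Real.hasDerivAt_sqrt hψpos.ne').comp_hasFDerivAt x hψ
  have hFc := (F_hasDeriv hρpos).comp_hasFDerivAt x hs
  have hq := (hasDerivAt_maxsq a (x 0)).comp_hasFDerivAt x h0
  have hquad := hq.const_mul (ε/2)
  have htot := hFc.add hquad
  rw [hasGradientAt_iff_hasFDerivAt]
  refine htot.congr_fderiv ?_
  ext v
  simp only [InnerProductSpace.toDual_apply_apply, PiLp.inner_apply, RCLike.inner_apply,
    starRingEnd_apply, star_trivial, Fin.sum_univ_two, PiLp.add_apply, PiLp.smul_apply,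
    smul_eq_mul, EuclideanSpace.single_apply, ContinuousLinearMap.add_apply,
    ContinuousLinearMap.smul_apply, PiLp.proj_apply, ContinuousLinearMap.coe_smul',
    Pi.smul_apply]
  have hρ : Real.sqrt (x 0 ^ 2 + x 1 ^ 2) ≠ 0 := hρpos.ne'
  field_simp
  simp only [if_true, if_neg (show (1 : Fin 2) ≠ 0 by decide)]
  ring

/-- along a solution `X` of the Nesterov flow for `f_{ε,a}`, the angular
momentum `J(t) = X₁(t)·Ẋ₂(t) − X₂(t)·Ẋ₁(t)` satisfies
`J′(t) = −(3/t)·J(t) + ε·X₂(t)·(X₁(t) − a)₊` for all `t > 0`. -/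
theorem angular_momentum_torque_equation (a ε : ℝ) (ha : 0 < a) (hε : 0 < ε)
    (X₀ : EuclideanSpace ℝ (Fin 2)) (X X' X'' : ℝ → EuclideanSpace ℝ (Fin 2))
    (hXcont : ContinuousOn X (Set.Ici 0))
    (hX' : ∀ t > (0:ℝ), HasDerivAt X (X' t) t)
    (hX'' : ∀ t > (0:ℝ), HasDerivAt X' (X'' t) t)
    (hX''cont : ContinuousOn X'' (Set.Ioi 0))
    (hX0 : X 0 = X₀)
    (hX'0 : Filter.Tendsto X' (nhdsWithin 0 (Set.Ioi 0)) (nhds 0))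
    (hODE : ∀ t > (0:ℝ), X'' t + (3 / t) • X' t + gradient (feps ε a) (X t) = 0)
    (J : ℝ → ℝ) (hJ : ∀ t, J t = X t 0 * X' t 1 - X t 1 * X' t 0) :
    ∀ t > (0:ℝ),
      HasDerivAt J (-(3 / t) * J t + ε * X t 1 * max (X t 0 - a) 0) t := by
  intro t ht
  have hJf : J = fun s => X s 0 * X' s 1 - X s 1 * X' s 0 := funext hJ
  have c0 : HasDerivAt (fun s => (X s 0 : ℝ)) (X' t 0) t := by
    have h := (EuclideanSpace.proj (0 : Fin 2) (𝕜 := ℝ)).hasFDerivAt.comp_hasDerivAt t (hX' t ht)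
    exact h
  have c1 : HasDerivAt (fun s => (X s 1 : ℝ)) (X' t 1) t := by
    have h := (EuclideanSpace.proj (1 : Fin 2) (𝕜 := ℝ)).hasFDerivAt.comp_hasDerivAt t (hX' t ht)
    exact h
  have d0 : HasDerivAt (fun s => (X' s 0 : ℝ)) (X'' t 0) t := by
    have h := (EuclideanSpace.proj (0 : Fin 2) (𝕜 := ℝ)).hasFDerivAt.comp_hasDerivAt t (hX'' t ht)
    exact h
  have d1 : HasDerivAt (fun s => (X' s 1 : ℝ)) (X'' t 1) t := by
    have h := (EuclideanSpace.proj (1 : Fin 2) (𝕜 := ℝ)).hasFDerivAt.comp_hasDerivAt t (hX'' t ht)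
    exact h
  have hprod : HasDerivAt (fun s => X s 0 * X' s 1 - X s 1 * X' s 0)
      (X' t 0 * X' t 1 + X t 0 * X'' t 1 - (X' t 1 * X' t 0 + X t 1 * X'' t 0)) t :=
    (c0.mul d1).sub (c1.mul d0)
  rw [hJf]
  have hodecoord : ∀ i : Fin 2,
      X'' t i = -(3/t) * X' t i - gradient (feps ε a) (X t) i := by
    intro i
    have h := congrArg (fun v : EuclideanSpace ℝ (Fin 2) => (v i : ℝ)) (hODE t ht)
    simp only [PiLp.add_apply, PiLp.smul_apply, smul_eq_mul, PiLp.zero_apply] at h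
    linarith
  convert hprod using 1
  beta_reduce
  rw [hodecoord 0, hodecoord 1]
  by_cases hz : X t 0 = 0 ∧ X t 1 = 0
  · obtain ⟨e0, e1⟩ := hz
    rw [e0, e1]
    have hm : max ((0:ℝ) - a) 0 = 0 := max_eq_right (by linarith)
    rw [hm]
    ring
  · have hg := (feps_hasGradient ε a (X t) hz).gradient
    rw [hg]
    simp only [PiLp.add_apply, PiLp.smul_apply, smul_eq_mul, EuclideanSpace.single_apply]
    norm_num
    ring
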